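/- Let z_0,...,z_m be pairwise distinct complex numbers and w_0,...,w_m nonzero complex numbers, and let λ ∈ ℂ be distinct from all z_j with ∑_{i=0}^m w_i/(λ−z_i) ≠ 0. Let W be the (m+1)×m bidiagonal matrix with W_{j,j} = −w_{j+1}, W_{j+1,j} = w_j and Z = diag(z_0,...,z_m). Then the row vector v = [r_0(λ),...,r_m(λ)], where r_j(λ) = (w_j/(λ−z_j))/(∑_i w_i/(λ−z_i)), is nonzero and satisfies v(ZW − λW) = 0, i.e., v is a left null vector of the pencil Z W − λ W. -/

import Mathlib

open Finset Matrix

/-- The `(m+1) × m` lower-bidiagonal barycentric weight matrix. -/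
def baryW (m : ℕ) (w : Fin (m + 1) → ℂ) : Matrix (Fin (m + 1)) (Fin m) ℂ :=
  Matrix.of fun i j =>
    if i = j.castSucc then -w j.succ else if i = j.succ then w j.castSucc else 0

/-- the row vector of barycentric basis function values at `λ`
is a nonzero left null vector of the shifted pencil `Z W - λ W`. -/
theorem bary_left_null_vector (m : ℕ) (z w : Fin (m + 1) → ℂ)
    (hz : Function.Injective z) (hw : ∀ j, w j ≠ 0) (lam : ℂ)
    (hlam : ∀ i, lam ≠ z i) (hd : (∑ i, w i / (lam - z i)) ≠ 0) :
    (fun i => (w i / (lam - z i)) / (∑ i', w i' / (lam - z i'))) ≠ 0 ∧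
      Matrix.vecMul (fun i => (w i / (lam - z i)) / (∑ i', w i' / (lam - z i')))
        (Matrix.diagonal z * baryW m w - lam • baryW m w) = 0 := by
  set d : ℂ := ∑ i', w i' / (lam - z i') with hdef
  set v : Fin (m + 1) → ℂ := fun i => (w i / (lam - z i)) / d with hv
  have hsub : ∀ i, lam - z i ≠ 0 := fun i => sub_ne_zero.mpr (hlam i)
  have key : ∀ i, v i * (z i - lam) = -(w i) / d := by
    intro i
    show w i / (lam - z i) / d * (z i - lam) = -w i / d
    rw [div_div, div_mul_eq_mul_div, div_eq_div_iff (mul_ne_zero (hsub i) hd) hd]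
    ring
  constructor
  · intro h
    have h0 : v 0 = 0 := congrFun h 0
    exact div_ne_zero (div_ne_zero (hw 0) (hsub 0)) hd h0
  · funext j
    have hne : (j.castSucc : Fin (m + 1)) ≠ j.succ :=
      ne_of_lt Fin.castSucc_lt_succ
    have expand : ∀ i : Fin (m + 1),
        v i * ((Matrix.diagonal z * baryW m w - lam • baryW m w) i j) =
          (if i = j.castSucc then v i * (z i - lam) * (-w j.succ) else 0) +
          (if i = j.succ then v i * (z i - lam) * (w j.castSucc) else 0) := by
      intro i
      simp only [Matrix.sub_apply, Matrix.smul_apply, Matrix.mul_apply,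
        Matrix.diagonal_apply, baryW, Matrix.of_apply, smul_eq_mul]
      simp only [ite_mul, zero_mul, Finset.sum_ite_eq, Finset.mem_univ, if_true]
      by_cases h1 : i = j.castSucc
      · subst h1; simp [hne]; ring
      · by_cases h2 : i = j.succ
        · subst h2; simp [h1]; ring
        · simp [h1, h2]
    rw [Matrix.vecMul]
    show ∑ i, v i * ((Matrix.diagonal z * baryW m w - lam • baryW m w) i j) = 0
    rw [Finset.sum_congr rfl (fun i _ => expand i), Finset.sum_add_distrib,
      Finset.sum_ite_eq' Finset.univ j.castSucc
        (fun i => v i * (z i - lam) * (-w j.succ)),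
      Finset.sum_ite_eq' Finset.univ j.succ
        (fun i => v i * (z i - lam) * (w j.castSucc))]
    simp only [Finset.mem_univ, if_true]
    rw [key, key]
    field_simp
    ring
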